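/- Let G be a group and V a finite-dimensional real vector space with a representation of G that is semisimple (semisimple as a module over the group algebra ℝ[G]). Then the complexification ℂ ⊗_ℝ V, with the induced G-action g·(z ⊗ v) = z ⊗ (g·v), is semisimple as a complex representation of G (as a module over ℂ[G]). -/

import Mathlib

open scoped TensorProduct

/-- The complexification of a real representation: `G` acts on `ℂ ⊗[ℝ] V` by
`g • (z ⊗ v) = z ⊗ (g • v)`. -/
noncomputable def Representation.complexify {G : Type*} [Group G] {V : Type*}
    [AddCommGroup V] [Module ℝ V] (ρ : Representation ℝ G V) :
    Representation ℂ G (ℂ ⊗[ℝ] V) :=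
  ((Module.End.baseChangeHom ℝ ℂ V).toRingHom.toMonoidHom).comp ρ

section Aux

variable {k : Type*} [CommRing k] {G V W : Type*} [Monoid G]
  [AddCommGroup V] [AddCommGroup W] [Module k V] [Module k W]

lemma RepAux.smul_def (θ : Representation k G V) (r : MonoidAlgebra k G) (x : θ.asModule) :
    r • x = θ.asAlgebraHom r x := rfl

lemma RepAux.algebraMap_smul (θ : Representation k G V) (c : k) (x : θ.asModule) :
    (algebraMap k (MonoidAlgebra k G) c) • x = c • x := by
  rw [RepAux.smul_def, AlgHom.commutes]
  rfl

lemma RepAux.of_smul (θ : Representation k G V) (g : G) (x : θ.asModule) :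
    (MonoidAlgebra.of k G g) • x = θ g x := by
  rw [RepAux.smul_def]
  simp [Representation.asAlgebraHom_single]
  rfl

/-- An equivariant linear map gives a `MonoidAlgebra`-linear map of `asModule`s. -/
noncomputable def RepAux.liftHom (θ : Representation k G V) (η : Representation k G W)
    (f : V →ₗ[k] W) (hf : ∀ g : G, f ∘ₗ θ g = η g ∘ₗ f) :
    θ.asModule →ₗ[MonoidAlgebra k G] η.asModule where
  toFun := f
  map_add' := f.map_add
  map_smul' r x := Rep.to_Module_monoidAlgebra_map_aux V W θ η f hf r x

end Aux

section Main

variable {G : Type*} [Group G] {V : Type*} [AddCommGroup V] [Module ℝ V]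
  (ρ : Representation ℝ G V)

lemma complexify_apply (g : G) (z : ℂ) (v : V) :
    ρ.complexify g (z ⊗ₜ[ℝ] v) = z ⊗ₜ[ℝ] (ρ g v) := rfl

lemma complexify_real_smul (g : G) (r : ℝ) (x : ℂ ⊗[ℝ] V) :
    ρ.complexify g (r • x) = r • ρ.complexify g x := by
  rw [← algebraMap_smul ℂ r x, ← algebraMap_smul ℂ r (ρ.complexify g x), map_smul]

/-- The restriction of scalars of the complexification, as a real representation. -/
noncomputable def resC : Representation ℝ G (ℂ ⊗[ℝ] V) where
  toFun g := (ρ.complexify g).restrictScalars ℝ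
  map_one' := by ext x; simp
  map_mul' g h := by ext x; simp

lemma resC_apply (g : G) (x : ℂ ⊗[ℝ] V) : resC ρ g x = ρ.complexify g x := rfl

/-- The `ℝ[G]`-linear map `v ↦ z ⊗ v`. -/
noncomputable def jmap (z : ℂ) :
    ρ.asModule →ₗ[MonoidAlgebra ℝ G] (resC ρ).asModule :=
  RepAux.liftHom ρ (resC ρ) (TensorProduct.mk ℝ ℂ V z) (fun g => by
    ext v
    rfl)

lemma resC_semisimple (h : IsSemisimpleModule (MonoidAlgebra ℝ G) ρ.asModule) :
    IsSemisimpleModule (MonoidAlgebra ℝ G) (resC ρ).asModule := by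
  have := h
  apply isSemisimpleModule_of_isSemisimpleModule_submodule'
    (p := fun b : Bool => LinearMap.range (jmap ρ (if b then 1 else Complex.I)))
  · intro b
    exact IsSemisimpleModule.range _
  · rw [eq_top_iff]
    rintro x -
    show x ∈ _
    set S : Submodule (MonoidAlgebra ℝ G) (resC ρ).asModule :=
      ⨆ b : Bool, LinearMap.range (jmap ρ (if b then 1 else Complex.I)) with hS
    have h1 : ∀ v : V, jmap ρ 1 v ∈ S := fun v =>
      Submodule.mem_iSup_of_mem true ⟨v, rfl⟩
    have hI : ∀ v : V, jmap ρ Complex.I v ∈ S := fun v =>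
      Submodule.mem_iSup_of_mem false ⟨v, rfl⟩
    induction x using TensorProduct.induction_on with
    | zero => exact Submodule.zero_mem _
    | tmul z v =>
        have hz : (z ⊗ₜ[ℝ] v : (resC ρ).asModule) =
            (algebraMap ℝ (MonoidAlgebra ℝ G) z.re) • jmap ρ 1 v +
            (algebraMap ℝ (MonoidAlgebra ℝ G) z.im) • jmap ρ Complex.I v := by
          rw [RepAux.algebraMap_smul, RepAux.algebraMap_smul]
          show (z ⊗ₜ[ℝ] v : ℂ ⊗[ℝ] V) =
            z.re • ((1 : ℂ) ⊗ₜ[ℝ] v) + z.im • ((Complex.I : ℂ) ⊗ₜ[ℝ] v)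
          rw [TensorProduct.smul_tmul', TensorProduct.smul_tmul',
            ← TensorProduct.add_tmul]
          congr 1
          simp [Complex.real_smul]
        rw [hz]
        exact add_mem (Submodule.smul_mem _ _ (h1 v)) (Submodule.smul_mem _ _ (hI v))
    | add x y hx hy => exact Submodule.add_mem _ hx hy

end Main

/-- The complexification of a semisimple finite-dimensional real
representation of a group `G` is semisimple as a complex representation of `G`. -/
theorem complexify_semisimple {G : Type*} [Group G] {V : Type*} [AddCommGroup V]
    [Module ℝ V] [FiniteDimensional ℝ V] (ρ : Representation ℝ G V)
    (h : IsSemisimpleModule (MonoidAlgebra ℝ G) ρ.asModule) :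
    IsSemisimpleModule (MonoidAlgebra ℂ G) ρ.complexify.asModule := by
  have hres := resC_semisimple ρ h
  refine IsSemisimpleModule.mk (toComplementedLattice := ⟨fun p => ?_⟩)
  -- `p` is closed under the `ℂ`-action and the `G`-action on `ℂ ⊗[ℝ] V`:
  have Fc : ∀ (c : ℂ) (x : ℂ ⊗[ℝ] V), x ∈ p → c • x ∈ p := by
    intro c x hx
    have h1 : (algebraMap ℂ (MonoidAlgebra ℂ G) c) • (show ρ.complexify.asModule from x)
        = c • x := RepAux.algebraMap_smul ρ.complexify c x
    exact h1 ▸ Submodule.smul_mem p _ hx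
  have Fg : ∀ (g : G) (x : ℂ ⊗[ℝ] V), x ∈ p → ρ.complexify g x ∈ p := by
    intro g x hx
    have h1 : (MonoidAlgebra.of ℂ G g) • (show ρ.complexify.asModule from x)
        = ρ.complexify g x := RepAux.of_smul ρ.complexify g x
    exact h1 ▸ Submodule.smul_mem p _ hx
  have Fr : ∀ (r : ℝ) (x : ℂ ⊗[ℝ] V), x ∈ p → r • x ∈ p := by
    intro r x hx
    have h1 : ((r : ℂ)) • x = r • x := algebraMap_smul ℂ r x
    exact h1 ▸ Fc _ x hx
  -- the same carrier, as an `ℝ[G]`-submodule of the restricted module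
  let p' : Submodule (MonoidAlgebra ℝ G) (resC ρ).asModule :=
    { carrier := show Set (resC ρ).asModule from (p : Set ρ.complexify.asModule)
      add_mem' := fun ha hb => p.add_mem ha hb
      zero_mem' := p.zero_mem
      smul_mem' := by
        intro r x hx
        show r • x ∈ (p : Set ρ.complexify.asModule)
        induction r using MonoidAlgebra.induction_on with
        | of g =>
            have h1 : ∀ y : (resC ρ).asModule,
                (MonoidAlgebra.of ℝ G g) • y = ρ.complexify g y :=
              fun y => RepAux.of_smul (resC ρ) g y
            rw [h1]
            exact Fg g x hx
        | add a b ha hb =>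
            rw [add_smul]
            exact p.add_mem ha hb
        | smul c r hr =>
            have h1 : ∀ y : (resC ρ).asModule,
                (algebraMap ℝ (MonoidAlgebra ℝ G) c) • y = c • y :=
              fun y => RepAux.algebraMap_smul (resC ρ) c y
            rw [Algebra.smul_def, mul_smul, h1]
            exact Fr c _ hr }
  obtain ⟨q', hq'⟩ := exists_isCompl p'
  set π : (resC ρ).asModule →ₗ[MonoidAlgebra ℝ G] p' := p'.linearProjOfIsCompl q' hq' with hπ
  set π₀ : ℂ ⊗[ℝ] V → ℂ ⊗[ℝ] V := fun x => Subtype.val (π x) with hπ₀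
  have π₀_add : ∀ x y : ℂ ⊗[ℝ] V, π₀ (x + y) = π₀ x + π₀ y :=
    fun x y => congrArg Subtype.val (map_add π x y)
  have π₀_mem : ∀ x : ℂ ⊗[ℝ] V, π₀ x ∈ p := fun x => (π x).2
  have π₀_id : ∀ x : ℂ ⊗[ℝ] V, x ∈ p → π₀ x = x := by
    intro x hx
    simp only [hπ₀]
    exact congrArg Subtype.val (Submodule.linearProjOfIsCompl_apply_left hq' ⟨x, hx⟩)
  have π₀_g : ∀ (g : G) (x : ℂ ⊗[ℝ] V), π₀ (ρ.complexify g x) = ρ.complexify g (π₀ x) := by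
    intro g x
    have h2 : ∀ y : (resC ρ).asModule,
        (MonoidAlgebra.of ℝ G g) • y = ρ.complexify g y :=
      fun y => RepAux.of_smul (resC ρ) g y
    rw [← h2 x]
    simp only [hπ₀]
    exact (congrArg Subtype.val (map_smul π (MonoidAlgebra.of ℝ G g) (show (resC ρ).asModule from x))).trans (h2 _)
  have π₀_r : ∀ (r : ℝ) (x : ℂ ⊗[ℝ] V), π₀ (r • x) = r • π₀ x := by
    intro r x
    have h2 : ∀ y : (resC ρ).asModule,
        (algebraMap ℝ (MonoidAlgebra ℝ G) r) • y = r • y :=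
      fun y => RepAux.algebraMap_smul (resC ρ) r y
    exact (congrArg (fun y => π₀ y) (h2 x)).symm.trans
      ((congrArg Subtype.val (map_smul π (algebraMap ℝ (MonoidAlgebra ℝ G) r)
        (show (resC ρ).asModule from x))).trans (h2 _))
  have π₀_neg : ∀ x : ℂ ⊗[ℝ] V, π₀ (-x) = - π₀ x := by
    intro x
    have := π₀_r (-1) x
    rwa [neg_one_smul, neg_one_smul] at this
  -- the averaged projection
  set f : ℂ ⊗[ℝ] V → ℂ ⊗[ℝ] V :=
    fun x => (2⁻¹ : ℂ) • (π₀ x - Complex.I • π₀ (Complex.I • x)) with hf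
  have f_add : ∀ x y : ℂ ⊗[ℝ] V, f (x + y) = f x + f y := by
    intro x y
    have h1 : Complex.I • (x + y) = Complex.I • x + Complex.I • y := smul_add _ _ _
    simp only [hf, h1, π₀_add]
    module
  have f_mem : ∀ x : ℂ ⊗[ℝ] V, f x ∈ p :=
    fun x => Fc _ _ (p.sub_mem (π₀_mem x) (Fc _ _ (π₀_mem _)))
  have f_id : ∀ x : ℂ ⊗[ℝ] V, x ∈ p → f x = x := by
    intro x hx
    simp only [hf, π₀_id x hx, π₀_id _ (Fc Complex.I x hx)]
    rw [smul_smul, Complex.I_mul_I, neg_one_smul, sub_neg_eq_add, ← two_smul ℂ, smul_smul]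
    norm_num
  have f_I : ∀ x : ℂ ⊗[ℝ] V, f (Complex.I • x) = Complex.I • f x := by
    intro x
    have hII : Complex.I • Complex.I • x = -x := by
      rw [smul_smul, Complex.I_mul_I, neg_one_smul]
    simp only [hf, hII, π₀_neg, smul_neg, sub_neg_eq_add]
    rw [smul_comm Complex.I ((2⁻¹ : ℂ)), smul_sub Complex.I, smul_smul Complex.I Complex.I,
      Complex.I_mul_I, neg_one_smul ℂ, sub_neg_eq_add]
    module
  have f_r : ∀ (r : ℝ) (x : ℂ ⊗[ℝ] V), f (r • x) = r • f x := by
    intro r x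
    have hIr : Complex.I • r • x = r • Complex.I • x := (smul_comm r Complex.I x).symm
    simp only [hf, hIr, π₀_r]
    rw [← smul_comm r Complex.I (π₀ (Complex.I • x)), ← smul_sub r,
      smul_comm ((2⁻¹ : ℂ)) r]
  have f_c : ∀ (c : ℂ) (x : ℂ ⊗[ℝ] V), f (c • x) = c • f x := by
    intro c x
    have hc : ∀ y : ℂ ⊗[ℝ] V, c • y = c.re • y + c.im • (Complex.I • y) := by
      intro y
      rw [← algebraMap_smul ℂ c.re y, ← algebraMap_smul ℂ c.im (Complex.I • y), smul_smul,
        ← add_smul]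
      congr 1
      simp only [Complex.coe_algebraMap]
      exact (Complex.re_add_im c).symm
    rw [hc x, hc (f x), f_add, f_r, f_r, f_I]
  have f_g : ∀ (g : G) (x : ℂ ⊗[ℝ] V),
      f (ρ.complexify g x) = ρ.complexify g (f x) := by
    intro g x
    have hgI : ∀ y : ℂ ⊗[ℝ] V, ρ.complexify g (Complex.I • y) = Complex.I • ρ.complexify g y :=
      fun y => map_smul (ρ.complexify g) _ _
    simp only [hf, map_smul, map_sub, hgI, ← π₀_g]
  have f_idem : ∀ x : ℂ ⊗[ℝ] V, f (f x) = f x := fun x => f_id _ (f_mem x)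
  -- M-typed versions of the above
  have f_add' : ∀ x y : ρ.complexify.asModule, f (x + y) = (f x : ρ.complexify.asModule) + f y :=
    fun x y => f_add x y
  have f_c' : ∀ (c : ℂ) (x : ρ.complexify.asModule),
      f (c • x) = c • (f x : ρ.complexify.asModule) := fun c x => f_c c x
  -- assemble the `ℂ[G]`-linear projection
  set F : ρ.complexify.asModule →ₗ[MonoidAlgebra ℂ G] ρ.complexify.asModule :=
    { toFun := f
      map_add' := f_add'
      map_smul' := by
        intro r x
        simp only [RingHom.id_apply]
        induction r using MonoidAlgebra.induction_on with
        | of g =>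
            have h1 : ∀ y : ρ.complexify.asModule,
                (MonoidAlgebra.of ℂ G g) • y = ρ.complexify g y :=
              fun y => RepAux.of_smul ρ.complexify g y
            rw [h1]
            exact (f_g g x).trans (h1 _).symm
        | add a b ha hb =>
            rw [add_smul]
            exact (f_add' _ _).trans ((congrArg₂ (fun u v : ρ.complexify.asModule => u + v) ha hb).trans
              (add_smul a b (show ρ.complexify.asModule from f x)).symm)
        | smul c r hr =>
            have h1 : ∀ y : ρ.complexify.asModule,
                (algebraMap ℂ (MonoidAlgebra ℂ G) c) • y = c • y :=
              fun y => RepAux.algebraMap_smul ρ.complexify c y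
            rw [Algebra.smul_def, mul_smul]
            exact (congrArg f (h1 _)).trans ((f_c' c _).trans
              ((congrArg (fun u : ρ.complexify.asModule => c • u) hr).trans
              ((h1 _).symm.trans (mul_smul _ r (show ρ.complexify.asModule from f x)).symm))) } with hF
  refine ⟨LinearMap.ker F, ?_, ?_⟩
  · rw [disjoint_iff_inf_le]
    intro x hx
    rw [Submodule.mem_inf] at hx
    obtain ⟨hxp, hxk⟩ := hx
    rw [Submodule.mem_bot]
    have h0 : F x = 0 := hxk
    have h1 : F x = x := f_id x hxp
    exact h1.symm.trans h0
  · rw [codisjoint_iff, eq_top_iff]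
    intro x _
    have hmem : F x ∈ p := f_mem x
    have hker : x - F x ∈ LinearMap.ker F := by
      rw [LinearMap.mem_ker, map_sub]
      have h2 : F (F x) = F x := f_idem x
      rw [h2, sub_self]
    refine Submodule.mem_sup.mpr ⟨F x, hmem, x - F x, hker, by abel⟩
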